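/- Let W be an n×n symmetric matrix, L_{[−W]} = D_{[−W]} − (−W) its Laplacian-style decomposition where (D_{[−W]})_ii = −Σ_j W_ij. Then λ_2(D_{[𝟙𝟙^T + σW]} − (𝟙𝟙^T + σW)) > 0 if and only if λ_max(L_{[−W]}) < n/σ, for any σ > 0, where L_{[−W]} = D_{[−W]} + W restricted in the sense above. -/

import Mathlib

open Matrix

/-- The `k`-th smallest eigenvalue of a Hermitian matrix (sorted in increasing order). -/
noncomputable def eigSorted {n : ℕ} {M : Matrix (Fin n) (Fin n) ℝ}
    (hM : M.IsHermitian) : Fin n → ℝ :=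
  hM.eigenvalues ∘ Tuple.sort hM.eigenvalues

section Aux


lemma posDefConj {n : ℕ} {U D : Matrix (Fin n) (Fin n) ℝ} (hD : D.PosDef) (hU : U * Uᴴ = 1) :
    (U * D * Uᴴ).PosDef := by
  refine Matrix.PosDef.of_dotProduct_mulVec_pos ?_ ?_
  · have := hD.1
    unfold IsHermitian at this ⊢
    simp only [conjTranspose_mul, conjTranspose_conjTranspose, this, mul_assoc]
  · intro x hx
    have hUx : Uᴴ *ᵥ x ≠ 0 := by
      intro h0
      apply hx
      have : U *ᵥ (Uᴴ *ᵥ x) = U *ᵥ 0 := by rw [h0]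
      rwa [mulVec_mulVec, hU, one_mulVec, mulVec_zero] at this
    have key : star x ⬝ᵥ ((U * D * Uᴴ) *ᵥ x) = star (Uᴴ *ᵥ x) ⬝ᵥ (D *ᵥ (Uᴴ *ᵥ x)) := by
      rw [← mulVec_mulVec, ← mulVec_mulVec, dotProduct_mulVec, star_mulVec,
        conjTranspose_conjTranspose]
    rw [key]
    exact hD.dotProduct_mulVec_pos hUx

lemma shift_iff {n : ℕ} {L : Matrix (Fin n) (Fin n) ℝ} (hL : L.IsHermitian)
    (c σ : ℝ) (hσ : 0 < σ) :
    ((c • (1 : Matrix (Fin n) (Fin n) ℝ) - σ • L)).PosDef ↔ ∀ k, σ * hL.eigenvalues k < c := by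
  set U : Matrix (Fin n) (Fin n) ℝ := (hL.eigenvectorUnitary : Matrix (Fin n) (Fin n) ℝ) with hUdef
  have hU1 : U * Uᴴ = 1 := by
    rw [← Matrix.star_eq_conjTranspose]
    exact (Matrix.mem_unitaryGroup_iff).mp hL.eigenvectorUnitary.2
  have hU2 : Uᴴ * U = 1 := by
    rw [← Matrix.star_eq_conjTranspose]
    exact (Matrix.mem_unitaryGroup_iff').mp hL.eigenvectorUnitary.2
  have hs : L = U * Matrix.diagonal hL.eigenvalues * Uᴴ := by
    have := hL.spectral_theorem
    simpa [Function.comp, Matrix.star_eq_conjTranspose] using this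
  have h2 : Matrix.diagonal (fun k => c - σ * hL.eigenvalues k)
      = c • (1 : Matrix (Fin n) (Fin n) ℝ) - σ • Matrix.diagonal hL.eigenvalues := by
    ext i j
    rcases eq_or_ne i j with rfl | hij
    · simp [Matrix.diagonal_apply_eq, Matrix.one_apply_eq]
    · simp [Matrix.diagonal_apply_ne _ hij, Matrix.one_apply_ne hij]
  have key : U * Matrix.diagonal (fun k => c - σ * hL.eigenvalues k) * Uᴴ
      = c • (1 : Matrix (Fin n) (Fin n) ℝ) - σ • L := by
    rw [h2, Matrix.mul_sub, Matrix.sub_mul, Matrix.mul_smul, Matrix.smul_mul, mul_one,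
      Matrix.mul_smul, Matrix.smul_mul, hU1, ← hs]
  constructor
  · intro h k
    have hD : (Matrix.diagonal (fun k => c - σ * hL.eigenvalues k)).PosDef := by
      have e : Matrix.diagonal (fun k => c - σ * hL.eigenvalues k)
          = Uᴴ * (U * Matrix.diagonal (fun k => c - σ * hL.eigenvalues k) * Uᴴ) * (Uᴴ)ᴴ := by
        rw [conjTranspose_conjTranspose, mul_assoc, mul_assoc, mul_assoc, hU2, mul_one,
          ← mul_assoc, hU2, one_mul]
      rw [e, key]
      exact posDefConj h (by rwa [conjTranspose_conjTranspose])
    have := (Matrix.posDef_diagonal_iff).mp hD k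
    linarith
  · intro h
    rw [← key]
    exact posDefConj (Matrix.posDef_diagonal_iff.mpr fun k => by linarith [h k]) hU1

variable {n : ℕ}

lemma dotON {B : Matrix (Fin n) (Fin n) ℝ} (hB : B.IsHermitian) (i j : Fin n) :
    ((hB.eigenvectorBasis i : EuclideanSpace ℝ (Fin n)) : Fin n → ℝ) ⬝ᵥ
    ((hB.eigenvectorBasis j : EuclideanSpace ℝ (Fin n)) : Fin n → ℝ) = if i = j then 1 else 0 := by
  have h := (orthonormal_iff_ite.mp hB.eigenvectorBasis.orthonormal) i j
  simpa [PiLp.inner_apply, RCLike.inner_apply, dotProduct, mul_comm] using h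

lemma expandON {B : Matrix (Fin n) (Fin n) ℝ} (hB : B.IsHermitian)
    (x : EuclideanSpace ℝ (Fin n)) :
    (x : Fin n → ℝ) = ∑ k, ((hB.eigenvectorBasis k : EuclideanSpace ℝ (Fin n)) ⬝ᵥ x) •
      ((hB.eigenvectorBasis k : EuclideanSpace ℝ (Fin n)) : Fin n → ℝ) := by
  have h := hB.eigenvectorBasis.sum_repr x
  conv_lhs => rw [← h]
  funext i
  simp [Finset.sum_apply, OrthonormalBasis.repr_apply_apply, PiLp.inner_apply,
    RCLike.inner_apply, dotProduct, mul_comm]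

lemma transpose_of_herm {B : Matrix (Fin n) (Fin n) ℝ} (hB : B.IsHermitian) : Bᵀ = B := by
  ext i j
  have := congrFun (congrFun hB.eq i) j
  simpa using this

lemma dot_symm {B : Matrix (Fin n) (Fin n) ℝ} (hB : B.IsHermitian) (u v : Fin n → ℝ) :
    u ⬝ᵥ (B *ᵥ v) = (B *ᵥ u) ⬝ᵥ v := by
  rw [dotProduct_mulVec, ← transpose_of_herm hB, vecMul_transpose, transpose_of_herm hB]

lemma lam2_pos_iff (hn : 2 ≤ n) {B : Matrix (Fin n) (Fin n) ℝ} (hB : B.IsHermitian)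
    (h1 : B *ᵥ (fun _ => (1 : ℝ)) = 0) :
    0 < eigSorted hB ⟨1, hn⟩ ↔ (B + Matrix.of fun _ _ => (1 : ℝ)).PosDef := by
  classical
  set τ := Tuple.sort hB.eigenvalues with hτ
  have hmono : Monotone (hB.eigenvalues ∘ τ) := Tuple.monotone_sort _
  set f0 : Fin n := ⟨0, by omega⟩
  set f1 : Fin n := ⟨1, by omega⟩
  have hf01 : f0 ≤ f1 := by simp [f0, f1, Fin.le_def]
  have hJH : (Matrix.of fun _ _ => (1 : ℝ) : Matrix (Fin n) (Fin n) ℝ).IsHermitian := by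
    ext i j; simp [Matrix.conjTranspose_apply]
  have hone_ne : (fun _ => (1 : ℝ) : Fin n → ℝ) ≠ 0 := by
    intro h
    have := congrFun h ⟨0, by omega⟩
    norm_num at this
  constructor
  · -- 0 < λ₂ → PosDef
    intro hpos
    -- 0 is an eigenvalue
    have hdet : B.det = 0 := by
      rw [← Matrix.exists_mulVec_eq_zero_iff]
      exact ⟨fun _ => 1, hone_ne, h1⟩
    have hprod : ∏ k, hB.eigenvalues k = 0 := by
      have := hB.det_eq_prod_eigenvalues
      rw [hdet] at this
      simpa using this.symm
    obtain ⟨k, -, hk⟩ := Finset.prod_eq_zero_iff.mp hprod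
    -- indices with zero eigenvalue sort to position 0
    have hzero_pos : ∀ m : Fin n, hB.eigenvalues m = 0 → τ.symm m = f0 := by
      intro m hm
      by_contra hne
      have hle : f1 ≤ τ.symm m := by
        rw [Fin.le_def]
        have : (τ.symm m).val ≠ 0 := by
          intro h0
          exact hne (Fin.ext h0)
        simp only [f1]
        omega
      have := hmono hle
      simp only [Function.comp_apply, Equiv.apply_symm_apply, hm] at this
      have : (0:ℝ) < 0 := lt_of_lt_of_le hpos (by exact this)
      exact lt_irrefl _ this
    have hs0 : hB.eigenvalues (τ f0) = 0 := by
      have := hzero_pos k hk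
      rw [← this, Equiv.apply_symm_apply]
      exact hk
    set k₀ := τ f0 with hk₀
    have huniq : ∀ m : Fin n, hB.eigenvalues m = 0 → m = k₀ := by
      intro m hm
      have := hzero_pos m hm
      rw [hk₀, ← this, Equiv.apply_symm_apply]
    have hnn : ∀ m : Fin n, 0 ≤ hB.eigenvalues m := by
      intro m
      rcases eq_or_ne (τ.symm m) f0 with h | h
      · have : hB.eigenvalues (τ (τ.symm m)) = hB.eigenvalues (τ f0) := by rw [h]
        rw [Equiv.apply_symm_apply] at this
        rw [this, hs0]
      · have hle : f1 ≤ τ.symm m := by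
          rw [Fin.le_def]
          have : (τ.symm m).val ≠ 0 := fun h0 => h (Fin.ext h0)
          simp only [f1]
          omega
        have h2 := hmono hle
        simp only [Function.comp_apply, Equiv.apply_symm_apply] at h2
        exact le_of_lt (lt_of_lt_of_le hpos h2)
    have hpsd : B.PosSemidef := hB.posSemidef_iff_eigenvalues_nonneg.mpr (fun i => hnn i)
    set v₀ : Fin n → ℝ := ((hB.eigenvectorBasis k₀ : EuclideanSpace ℝ (Fin n)) : Fin n → ℝ)
      with hv₀
    -- kernel of B is spanned by v₀
    have hker : ∀ x : Fin n → ℝ, B *ᵥ x = 0 → x = (v₀ ⬝ᵥ x) • v₀ := by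
      intro x hx
      have hexp := expandON hB (WithLp.toLp 2 x)
      simp only [WithLp.ofLp_toLp] at hexp
      have hcoef : ∀ m : Fin n, m ≠ k₀ →
          ((hB.eigenvectorBasis m : EuclideanSpace ℝ (Fin n)) : Fin n → ℝ) ⬝ᵥ x = 0 := by
        intro m hm
        have heig : hB.eigenvalues m ≠ 0 := fun h => hm (huniq m h)
        have h3 : ((hB.eigenvectorBasis m : EuclideanSpace ℝ (Fin n)) : Fin n → ℝ) ⬝ᵥ (B *ᵥ x)
            = 0 := by rw [hx, dotProduct_zero]
        rw [dot_symm hB] at h3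
        have h5 : B *ᵥ ((hB.eigenvectorBasis m : EuclideanSpace ℝ (Fin n)) : Fin n → ℝ)
            = hB.eigenvalues m • ((hB.eigenvectorBasis m : EuclideanSpace ℝ (Fin n)) : Fin n → ℝ) :=
          hB.mulVec_eigenvectorBasis m
        rw [h5, smul_dotProduct, smul_eq_mul] at h3
        exact (mul_eq_zero.mp h3).resolve_left heig
      conv_lhs => rw [hexp]
      rw [Finset.sum_eq_single_of_mem k₀ (Finset.mem_univ _)
        (fun m _ hm => by rw [hcoef m hm, zero_smul])]
    obtain ⟨d, hd⟩ : ∃ d : ℝ, (fun _ => (1:ℝ)) = d • v₀ := ⟨_, hker _ h1⟩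
    have hd0 : d ≠ 0 := by
      intro h
      rw [h, zero_smul] at hd
      exact hone_ne hd
    refine Matrix.PosDef.of_dotProduct_mulVec_pos (hB.add hJH) (fun x hx => ?_)
    have hstar : star x = x := by simp
    have hJx : (Matrix.of fun _ _ => (1:ℝ) : Matrix (Fin n) (Fin n) ℝ) *ᵥ x
        = ((fun _ => (1:ℝ)) ⬝ᵥ x) • (fun _ => (1:ℝ)) := by
      funext i
      simp [Matrix.mulVec, dotProduct]
    have hBpart : 0 ≤ x ⬝ᵥ (B *ᵥ x) := by
      have := hpsd.dotProduct_mulVec_nonneg x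
      rwa [hstar] at this
    set t : ℝ := (fun _ => (1:ℝ)) ⬝ᵥ x with ht
    have hsplit : star x ⬝ᵥ ((B + Matrix.of fun _ _ => (1:ℝ)) *ᵥ x)
        = x ⬝ᵥ (B *ᵥ x) + t * t := by
      rw [hstar, Matrix.add_mulVec, dotProduct_add, hJx, dotProduct_smul, smul_eq_mul]
      congr 1
      rw [dotProduct_comm]
    rw [hsplit]
    rcases lt_or_eq_of_le hBpart with h | h
    · nlinarith [mul_self_nonneg t]
    rcases lt_or_eq_of_le (mul_self_nonneg t) with h2 | h2
    · nlinarith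
    exfalso
    have hBx : B *ᵥ x = 0 := by
      have := (hpsd.dotProduct_mulVec_zero_iff x)
      rw [hstar] at this
      exact this.mp h.symm
    have hxv : x = (v₀ ⬝ᵥ x) • v₀ := hker x hBx
    have ht0 : t = 0 := by nlinarith
    -- t = 1 ⬝ᵥ x = d * (v₀ ⬝ᵥ x)
    have hvv : v₀ ⬝ᵥ v₀ = 1 := by
      have := dotON hB k₀ k₀
      simpa [v₀] using this
    have : t = d * (v₀ ⬝ᵥ x) := by
      rw [ht]
      conv_lhs => rw [hd, hxv]
      rw [smul_dotProduct, dotProduct_smul, smul_eq_mul, smul_eq_mul, hvv]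
      ring
    have hc0 : v₀ ⬝ᵥ x = 0 := by
      rcases mul_eq_zero.mp (ht0 ▸ this.symm) with h | h
      · exact absurd h hd0
      · exact h
    apply hx
    rw [hxv, hc0, zero_smul]
  · -- PosDef → 0 < λ₂
    intro hpd
    by_contra hle
    push_neg at hle
    have hs0 : hB.eigenvalues (τ f0) ≤ 0 := le_trans (hmono hf01) hle
    set k₀ := τ f0
    set k₁ := τ f1
    have hkne : k₀ ≠ k₁ := by
      intro h
      have := τ.injective h
      simp [f0, f1, Fin.ext_iff] at this
    set v₀ : Fin n → ℝ := ((hB.eigenvectorBasis k₀ : EuclideanSpace ℝ (Fin n)) : Fin n → ℝ)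
    set v₁ : Fin n → ℝ := ((hB.eigenvectorBasis k₁ : EuclideanSpace ℝ (Fin n)) : Fin n → ℝ)
    set t₀ : ℝ := (fun _ => (1:ℝ)) ⬝ᵥ v₀ with ht₀
    set t₁ : ℝ := (fun _ => (1:ℝ)) ⬝ᵥ v₁ with ht₁
    obtain ⟨a, b, hab, hsum⟩ : ∃ a b : ℝ, ¬(a = 0 ∧ b = 0) ∧ a * t₀ + b * t₁ = 0 := by
      by_cases h : t₀ = 0
      · exact ⟨1, 0, by simp, by simp [h]⟩
      · exact ⟨t₁, -t₀, fun hc => h (by simpa using hc.2), by ring⟩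
    set x : Fin n → ℝ := a • v₀ + b • v₁ with hxdef
    have hv00 : v₀ ⬝ᵥ v₀ = 1 := by simpa [v₀] using dotON hB k₀ k₀
    have hv11 : v₁ ⬝ᵥ v₁ = 1 := by simpa [v₁] using dotON hB k₁ k₁
    have hv01 : v₀ ⬝ᵥ v₁ = 0 := by simpa [v₀, v₁, hkne] using dotON hB k₀ k₁
    have hv10 : v₁ ⬝ᵥ v₀ = 0 := by simpa [v₀, v₁, Ne.symm hkne] using dotON hB k₁ k₀
    have hx0 : x ≠ 0 := by
      intro h
      apply hab
      constructor
      · have := congrArg (fun y => v₀ ⬝ᵥ y) h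
        simpa [hxdef, dotProduct_add, dotProduct_smul, smul_eq_mul, hv00, hv01] using this
      · have := congrArg (fun y => v₁ ⬝ᵥ y) h
        simpa [hxdef, dotProduct_add, dotProduct_smul, smul_eq_mul, hv11, hv10] using this
    have h1x : (fun _ => (1:ℝ)) ⬝ᵥ x = 0 := by
      rw [hxdef, dotProduct_add, dotProduct_smul, dotProduct_smul, smul_eq_mul, smul_eq_mul,
        ← ht₀, ← ht₁, hsum]
    have hBx : B *ᵥ x = (a * hB.eigenvalues k₀) • v₀ + (b * hB.eigenvalues k₁) • v₁ := by
      rw [hxdef, Matrix.mulVec_add, Matrix.mulVec_smul, Matrix.mulVec_smul]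
      have e0 : B *ᵥ v₀ = hB.eigenvalues k₀ • v₀ := hB.mulVec_eigenvectorBasis k₀
      have e1 : B *ᵥ v₁ = hB.eigenvalues k₁ • v₁ := hB.mulVec_eigenvectorBasis k₁
      rw [e0, e1, smul_smul, smul_smul]
    have hquad : x ⬝ᵥ (B *ᵥ x) = a * a * hB.eigenvalues k₀ + b * b * hB.eigenvalues k₁ := by
      rw [hBx, hxdef]
      simp only [dotProduct_add, add_dotProduct, dotProduct_smul, smul_dotProduct,
        smul_eq_mul, hv00, hv11, hv01, hv10]
      ring
    have hJx : (Matrix.of fun _ _ => (1:ℝ) : Matrix (Fin n) (Fin n) ℝ) *ᵥ x = 0 := by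
      funext i
      have : (Matrix.of fun _ _ => (1:ℝ) : Matrix (Fin n) (Fin n) ℝ) *ᵥ x
          = ((fun _ => (1:ℝ)) ⬝ᵥ x) • (fun _ => (1:ℝ)) := by
        funext j
        simp [Matrix.mulVec, dotProduct]
      rw [this, h1x, zero_smul]
    have hval := hpd.dotProduct_mulVec_pos hx0
    have hstar : star x = x := by simp
    rw [hstar, Matrix.add_mulVec, dotProduct_add, hJx, dotProduct_zero, add_zero, hquad] at hval
    have he0 : hB.eigenvalues k₀ ≤ 0 := hs0
    have he1 : hB.eigenvalues k₁ ≤ 0 := hle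
    nlinarith [mul_self_nonneg a, mul_self_nonneg b]


end Aux

/-- For a symmetric `W` (with zero diagonal) and `σ > 0`:
`λ₂(D_{𝟙𝟙ᵀ + σW} − (𝟙𝟙ᵀ + σW)) > 0` iff `λ_max(L_{[−W]}) < n/σ`, where for a symmetric
matrix `M`, `D_M` is the diagonal matrix of row sums of `M` and `L_M = D_M − M`. -/

theorem stmt8 {n : ℕ} (hn : 2 ≤ n) (σ : ℝ) (hσ : 0 < σ)
    (W : Matrix (Fin n) (Fin n) ℝ) (hW : W.IsHermitian) (hdiag : ∀ i, W i i = 0)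
    (J A L : Matrix (Fin n) (Fin n) ℝ)
    (hJ : J = Matrix.of fun _ _ => (1 : ℝ))
    (hAdef : A = Matrix.diagonal (fun i => ∑ j, (J + σ • W) i j) - (J + σ • W))
    (hLdef : L = Matrix.diagonal (fun i => ∑ j, (-W) i j) - (-W))
    (hA : A.IsHermitian) (hL : L.IsHermitian) :
    0 < eigSorted hA ⟨1, by omega⟩ ↔ (⨆ k, hL.eigenvalues k) < n / σ := by
  subst hJ
  have hAv : A *ᵥ (fun _ => (1 : ℝ)) = 0 := by
    funext i
    rw [hAdef]
    simp [Matrix.mulVec, dotProduct, Matrix.sub_apply, Matrix.diagonal_apply,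
      Finset.sum_sub_distrib, Finset.sum_ite_eq]
  have hAJ : A + Matrix.of (fun _ _ => (1 : ℝ)) = (n : ℝ) • (1 : Matrix (Fin n) (Fin n) ℝ)
      - σ • L := by
    rw [hAdef, hLdef]
    ext i j
    rcases eq_or_ne i j with rfl | hij
    · simp only [Matrix.add_apply, Matrix.sub_apply, Matrix.smul_apply, Matrix.of_apply,
        Matrix.diagonal_apply_eq, Matrix.one_apply_eq, Matrix.neg_apply, Pi.add_apply,
        Pi.neg_apply, smul_eq_mul]
      rw [Finset.sum_add_distrib]
      simp only [Matrix.of_apply, Matrix.smul_apply, smul_eq_mul, Finset.sum_const,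
        Finset.card_univ, Fintype.card_fin, nsmul_eq_mul, mul_one]
      have hmul : ∑ x, σ * W i x = σ * ∑ x, W i x := (Finset.mul_sum _ _ _).symm
      rw [hmul, Finset.sum_neg_distrib]
      ring
    · simp only [Matrix.add_apply, Matrix.sub_apply, Matrix.smul_apply, Matrix.of_apply,
        Matrix.diagonal_apply_ne _ hij, Matrix.one_apply_ne hij, Matrix.neg_apply,
        Pi.add_apply, Pi.neg_apply, smul_eq_mul]
      ring
  rw [lam2_pos_iff hn hA hAv, hAJ, shift_iff hL (n : ℝ) σ hσ]
  haveI : Nonempty (Fin n) := ⟨⟨0, by omega⟩⟩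
  constructor
  · intro h
    obtain ⟨k0, hk0⟩ := Finite.exists_max hL.eigenvalues
    have h1 : (⨆ k, hL.eigenvalues k) ≤ hL.eigenvalues k0 := ciSup_le hk0
    have h2 : hL.eigenvalues k0 < (n : ℝ) / σ := by
      rw [lt_div_iff₀ hσ, mul_comm]
      exact h k0
    exact lt_of_le_of_lt h1 h2
  · intro h k
    have h1 : hL.eigenvalues k ≤ ⨆ m, hL.eigenvalues m :=
      le_ciSup (Set.Finite.bddAbove (Set.finite_range _)) k
    have h2 : hL.eigenvalues k < (n : ℝ) / σ := lt_of_le_of_lt h1 h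
    rw [lt_div_iff₀ hσ] at h2
    linarith [h2]
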